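/- Let n ≥ 1 and 1 ≤ m < 2^{n/2} be integers. Let R = 𝒳 × 𝒴 ⊆ {0,1}^{nm} × {0,1}^{nm} be a rectangle of size |𝒳|·|𝒴| ≥ 2^{2nm−m+2}, and let s ∈ {0,1}^n be any string. Then there exists a subrectangle R' = 𝒳' × 𝒴' of R (with 𝒳' ⊆ 𝒳 and 𝒴' ⊆ 𝒴) of size at least 2^{−2n−2}·|𝒳|·|𝒴| such that for every (X,Y) ∈ R', s is not a solution to XOR-Missing-String on (X,Y); that is, s = x_i ⊕ y_j for some i,j ∈ [m]. -/

import Mathlib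

open Finset

/-- The set of instances in `𝒳` in which string `a` appears as a row. -/
def xmsAppears {n m : ℕ} (𝒳 : Finset (Fin m → Fin n → Bool)) (a : Fin n → Bool) :
    Finset (Fin m → Fin n → Bool) := 𝒳.filter (fun X => ∃ i, X i = a)

/-- Strings appearing in at least a `2^{-(n+1)}` fraction of `𝒳`. -/
def xmsHeavy {n m : ℕ} (𝒳 : Finset (Fin m → Fin n → Bool)) : Finset (Fin n → Bool) :=
  Finset.univ.filter (fun a => 𝒳.card ≤ 2 ^ (n + 1) * (xmsAppears 𝒳 a).card)

lemma xmsHeavy_large {n m : ℕ} (hn : 1 ≤ n) (hm : 1 ≤ m)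
    (𝒳 : Finset (Fin m → Fin n → Bool))
    (hcard : 2 ^ ((n - 1) * m + 2) ≤ 𝒳.card) :
    2 ^ (n - 1) < (xmsHeavy 𝒳).card := by
  by_contra hG
  push_neg at hG
  set G := xmsHeavy 𝒳 with hGdef
  -- split 𝒳 according to whether all rows are heavy
  have hsplit := Finset.card_filter_add_card_filter_not
    (s := 𝒳) (p := fun X => ∀ i, X i ∈ G)
  set A := 𝒳.filter (fun X => ∀ i, X i ∈ G) with hA
  set B := 𝒳.filter (fun X => ¬ ∀ i, X i ∈ G) with hB
  -- A is contained in G^m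
  have hAcard : A.card ≤ 2 ^ ((n - 1) * m) := by
    have hsub : A ⊆ Fintype.piFinset (fun _ : Fin m => G) := by
      intro X hX
      rw [Fintype.mem_piFinset]
      exact (Finset.mem_filter.mp hX).2
    calc A.card ≤ (Fintype.piFinset (fun _ : Fin m => G)).card := Finset.card_le_card hsub
      _ = G.card ^ m := by rw [Fintype.card_piFinset]; simp
      _ ≤ (2 ^ (n - 1)) ^ m := Nat.pow_le_pow_left hG m
      _ = 2 ^ ((n - 1) * m) := by rw [← pow_mul]
  -- B is covered by light appearances
  have hBcard : 2 ^ (n + 1) * B.card ≤ 2 ^ n * (𝒳.card - 1) := by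
    have hsub : B ⊆ Gᶜ.biUnion (fun a => xmsAppears 𝒳 a) := by
      intro X hX
      rw [Finset.mem_biUnion]
      obtain ⟨hX𝒳, hnot⟩ := Finset.mem_filter.mp hX
      push_neg at hnot
      obtain ⟨i, hi⟩ := hnot
      exact ⟨X i, Finset.mem_compl.mpr hi, Finset.mem_filter.mpr ⟨hX𝒳, ⟨i, rfl⟩⟩⟩
    have h1 : B.card ≤ ∑ a ∈ Gᶜ, (xmsAppears 𝒳 a).card :=
      le_trans (Finset.card_le_card hsub) (Finset.card_biUnion_le)
    have h2 : 2 ^ (n + 1) * B.card ≤ ∑ a ∈ Gᶜ, 2 ^ (n + 1) * (xmsAppears 𝒳 a).card := by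
      rw [← Finset.mul_sum]
      exact Nat.mul_le_mul_left _ h1
    have h3 : ∑ a ∈ Gᶜ, 2 ^ (n + 1) * (xmsAppears 𝒳 a).card ≤
        ∑ a ∈ Gᶜ, (𝒳.card - 1) := by
      apply Finset.sum_le_sum
      intro a ha
      have : ¬ (𝒳.card ≤ 2 ^ (n + 1) * (xmsAppears 𝒳 a).card) := by
        intro hcontra
        have : a ∈ G := by
          rw [hGdef, xmsHeavy, Finset.mem_filter]
          exact ⟨Finset.mem_univ a, hcontra⟩
        exact (Finset.mem_compl.mp ha) this
      omega
    have h4 : ∑ a ∈ Gᶜ, (𝒳.card - 1) ≤ 2 ^ n * (𝒳.card - 1) := by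
      rw [Finset.sum_const, smul_eq_mul]
      apply Nat.mul_le_mul_right
      calc Gᶜ.card ≤ Fintype.card (Fin n → Bool) := Finset.card_le_univ _
        _ = 2 ^ n := by simp
    omega
  -- combine
  have hX1 : 1 ≤ 𝒳.card := le_trans (Nat.one_le_two_pow) hcard
  set C := 𝒳.card with hC
  set P := (2 : ℕ) ^ ((n - 1) * m) with hP
  have hCP : 4 * P ≤ C := by
    rw [hC, hP]
    calc 4 * 2 ^ ((n - 1) * m) = 2 ^ ((n - 1) * m + 2) := by ring
      _ ≤ 𝒳.card := hcard
  have key : 2 ^ (n + 1) * C ≤ 2 ^ (n + 1) * P + 2 ^ n * (C - 1) := by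
    calc 2 ^ (n + 1) * C = 2 ^ (n + 1) * (A.card + B.card) := by rw [hsplit]
      _ = 2 ^ (n + 1) * A.card + 2 ^ (n + 1) * B.card := by ring
      _ ≤ 2 ^ (n + 1) * P + 2 ^ n * (C - 1) :=
        Nat.add_le_add (Nat.mul_le_mul_left _ hAcard) hBcard
  have hpow : (2 : ℕ) ^ (n + 1) = 2 * 2 ^ n := by rw [pow_succ]; ring
  rw [hpow] at key
  have hq : 0 < (2 : ℕ) ^ n := Nat.pow_pos (n := n) (by norm_num)
  -- from key: 2^n * (C + 1) ≤ 2 * 2^n * P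
  have key2 : 2 ^ n * (C + 1) ≤ 2 ^ n * (2 * P) := by
    have hsub : 2 ^ n * (C - 1) + 2 ^ n = 2 ^ n * C := by
      have : C - 1 + 1 = C := Nat.succ_pred_eq_of_pos hX1
      calc 2 ^ n * (C - 1) + 2 ^ n = 2 ^ n * ((C - 1) + 1) := by ring
        _ = 2 ^ n * C := by rw [this]
    nlinarith [key, hsub]
  have : C + 1 ≤ 2 * P := Nat.le_of_mul_le_mul_left key2 hq
  have hP1 : 1 ≤ P := Nat.one_le_two_pow
  omega

theorem stmt0 (n m : ℕ) (hn : 1 ≤ n) (hm : 1 ≤ m)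
    (hm2 : (m : ℝ) < (2 : ℝ) ^ ((n : ℝ) / 2))
    (𝒳 𝒴 : Finset (Fin m → Fin n → Bool))
    (hsize : (2 : ℕ) ^ (2 * n * m - m + 2) ≤ 𝒳.card * 𝒴.card)
    (s : Fin n → Bool) :
    ∃ 𝒳' 𝒴' : Finset (Fin m → Fin n → Bool),
      𝒳' ⊆ 𝒳 ∧ 𝒴' ⊆ 𝒴 ∧
      ((𝒳.card : ℝ) * (𝒴.card : ℝ)) / 2 ^ (2 * n + 2) ≤ (𝒳'.card : ℝ) * (𝒴'.card : ℝ) ∧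
      ∀ X ∈ 𝒳', ∀ Y ∈ 𝒴', ∃ i j : Fin m, s = fun t => Bool.xor (X i t) (Y j t) := by
  -- cardinality of the whole space
  have huniv : Fintype.card (Fin m → Fin n → Bool) = 2 ^ (n * m) := by
    simp [Fintype.card_fun, ← pow_mul, mul_comm]
  have hXle : 𝒳.card ≤ 2 ^ (n * m) := huniv ▸ Finset.card_le_univ 𝒳
  have hYle : 𝒴.card ≤ 2 ^ (n * m) := huniv ▸ Finset.card_le_univ 𝒴
  -- each side of the rectangle is big
  have hexp : 2 * n * m - m + 2 = ((n - 1) * m + 2) + n * m := by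
    obtain ⟨k, rfl⟩ : ∃ k, n = k + 1 := ⟨n - 1, (Nat.succ_pred_eq_of_pos hn).symm⟩
    simp only [Nat.add_sub_cancel]
    ring_nf
    omega
  have hbig : ∀ 𝒵 𝒲 : Finset (Fin m → Fin n → Bool),
      2 ^ (2 * n * m - m + 2) ≤ 𝒵.card * 𝒲.card → 𝒲.card ≤ 2 ^ (n * m) →
      2 ^ ((n - 1) * m + 2) ≤ 𝒵.card := by
    intro 𝒵 𝒲 h hle
    have h1 : 2 ^ ((n - 1) * m + 2) * 2 ^ (n * m) ≤ 𝒵.card * 2 ^ (n * m) := by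
      calc 2 ^ ((n - 1) * m + 2) * 2 ^ (n * m) = 2 ^ (2 * n * m - m + 2) := by
            rw [← pow_add, hexp]
        _ ≤ 𝒵.card * 𝒲.card := h
        _ ≤ 𝒵.card * 2 ^ (n * m) := Nat.mul_le_mul_left _ hle
    exact Nat.le_of_mul_le_mul_right h1 (Nat.pow_pos (by norm_num))
  have hXbig : 2 ^ ((n - 1) * m + 2) ≤ 𝒳.card := hbig 𝒳 𝒴 hsize hYle
  have hYbig : 2 ^ ((n - 1) * m + 2) ≤ 𝒴.card := by
    apply hbig 𝒴 𝒳 _ hXle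
    rw [Nat.mul_comm 𝒴.card]; exact hsize
  have hGX := xmsHeavy_large hn hm 𝒳 hXbig
  have hGY := xmsHeavy_large hn hm 𝒴 hYbig
  -- the xor-with-s shift
  set σ : (Fin n → Bool) → (Fin n → Bool) := fun a => fun t => Bool.xor (a t) (s t) with hσ
  have hσinv : Function.Involutive σ := by
    intro a; funext t; simp [hσ]
  set G' := (xmsHeavy 𝒴).image σ with hG'
  have hG'card : G'.card = (xmsHeavy 𝒴).card :=
    Finset.card_image_of_injective _ hσinv.injective
  -- the heavy sets intersect after shifting
  have hinter : ((xmsHeavy 𝒳) ∩ G').Nonempty := by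
    rw [← Finset.card_pos]
    have h1 := Finset.card_union_add_card_inter (xmsHeavy 𝒳) G'
    have h2 : ((xmsHeavy 𝒳) ∪ G').card ≤ 2 ^ n := by
      calc ((xmsHeavy 𝒳) ∪ G').card ≤ Fintype.card (Fin n → Bool) := Finset.card_le_univ _
        _ = 2 ^ n := by simp
    have h3 : 2 ^ n < (xmsHeavy 𝒳).card + G'.card := by
      rw [hG'card]
      obtain ⟨k, rfl⟩ : ∃ k, n = k + 1 := ⟨n - 1, (Nat.succ_pred_eq_of_pos hn).symm⟩
      simp only [Nat.add_sub_cancel] at hGX hGY ⊢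
      have : (2 : ℕ) ^ (k + 1) = 2 ^ k + 2 ^ k := by ring
      omega
    omega
  obtain ⟨a, ha⟩ := hinter
  rw [Finset.mem_inter] at ha
  obtain ⟨haX, haG'⟩ := ha
  rw [hG', Finset.mem_image] at haG'
  obtain ⟨b, hbY, hba⟩ := haG'
  -- the subrectangle
  refine ⟨xmsAppears 𝒳 a, xmsAppears 𝒴 b, Finset.filter_subset _ _, Finset.filter_subset _ _,
    ?_, ?_⟩
  · -- size
    have hXa : 𝒳.card ≤ 2 ^ (n + 1) * (xmsAppears 𝒳 a).card :=
      (Finset.mem_filter.mp haX).2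
    have hYb : 𝒴.card ≤ 2 ^ (n + 1) * (xmsAppears 𝒴 b).card :=
      (Finset.mem_filter.mp hbY).2
    have hnat : 𝒳.card * 𝒴.card ≤
        2 ^ (2 * n + 2) * ((xmsAppears 𝒳 a).card * (xmsAppears 𝒴 b).card) := by
      calc 𝒳.card * 𝒴.card
          ≤ (2 ^ (n + 1) * (xmsAppears 𝒳 a).card) * (2 ^ (n + 1) * (xmsAppears 𝒴 b).card) :=
            Nat.mul_le_mul hXa hYb
        _ = (2 ^ (n + 1) * 2 ^ (n + 1)) * ((xmsAppears 𝒳 a).card * (xmsAppears 𝒴 b).card) := by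
            ring
        _ = 2 ^ (2 * n + 2) * ((xmsAppears 𝒳 a).card * (xmsAppears 𝒴 b).card) := by
            rw [← pow_add]; congr 1; ring
    rw [div_le_iff₀ (by positivity)]
    have := (Nat.cast_le (α := ℝ)).mpr hnat
    push_cast at this ⊢
    linarith
  · -- the combinatorial property
    intro X hX Y hY
    obtain ⟨i, hi⟩ := (Finset.mem_filter.mp hX).2
    obtain ⟨j, hj⟩ := (Finset.mem_filter.mp hY).2
    refine ⟨i, j, ?_⟩
    funext t
    have hat : a t = Bool.xor (b t) (s t) := by rw [← hba]
    rw [hi, hj, hat]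
    cases b t <;> cases s t <;> rfl
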